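/- Let L₁ and L₂ be regular languages over Σ. If the hairpin completion H_κ(L₁,L₂) is regular, then the growth indicator of the language MGP(L₁,L₂) of minimal gamma-alpha-prefixes is at most 1 (i.e., MGP(L₁,L₂) has polynomial or finite growth). -/

import Mathlib

/-- The antimorphic extension of an involution on letters to words. -/
def ovr {σ : Type} (bar : σ → σ) (w : List σ) : List σ := (w.map bar).reverse

/-- The hairpin completion `H_κ(L₁, L₂)`. -/
def hairpinCompletion {σ : Type} (bar : σ → σ) (κ : ℕ) (L1 L2 : Language σ) :
    Language σ :=
  { π | ∃ γ α β : List σ,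
      π = γ ++ α ++ β ++ ovr bar α ++ ovr bar γ ∧
      κ ≤ α.length ∧
      (γ ++ α ++ β ++ ovr bar α ∈ L1 ∨ α ++ β ++ ovr bar α ++ ovr bar γ ∈ L2) }

/-- The canonical factorization `(γ, α, β)` of a word `π` of the hairpin completion. -/
def CanonFact {σ : Type} (bar : σ → σ) (κ : ℕ) (L1 L2 : Language σ)
    (π γ α β : List σ) : Prop :=
  π = γ ++ α ++ β ++ ovr bar α ++ ovr bar γ ∧
  α.length = κ ∧
  (γ ++ α ++ β ++ ovr bar α ∈ L1 ∨ α ++ β ++ ovr bar α ++ ovr bar γ ∈ L2) ∧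
  (∀ u : List σ, u <+: π → u ∈ L1 → u <+: γ ++ α ++ β ++ ovr bar α) ∧
  (∀ u : List σ, u <:+ π → u ∈ L2 → u <:+ α ++ β ++ ovr bar α ++ ovr bar γ)

/-- The language of minimal gamma-alpha-prefixes of words of the hairpin completion. -/
def MGP {σ : Type} (bar : σ → σ) (κ : ℕ) (L1 L2 : Language σ) : Language σ :=
  { p | ∃ π γ α β : List σ, π ∈ hairpinCompletion bar κ L1 L2 ∧
      CanonFact bar κ L1 L2 π γ α β ∧ p = γ ++ α }

/-- The language of middle factors of canonical factorizations of words
of the hairpin completion. -/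
def Mid {σ : Type} (bar : σ → σ) (κ : ℕ) (L1 L2 : Language σ) : Language σ :=
  { β | ∃ π γ α : List σ, π ∈ hairpinCompletion bar κ L1 L2 ∧
      CanonFact bar κ L1 L2 π γ α β }

/-- The growth indicator of a language: the infimum of all `λ ≥ 0` such that
`|L ∩ Σ^m| ≤ c·λ^m` for some constant `c > 0` and all `m`. -/
noncomputable def growthInd {σ : Type} (L : Language σ) : ℝ :=
  sInf { l : ℝ | 0 ≤ l ∧ ∃ c : ℝ, 0 < c ∧
    ∀ m : ℕ, (Set.ncard { w : List σ | w ∈ L ∧ w.length = m } : ℝ) ≤ c * l ^ m }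

section Aux
variable {σ : Type} (bar : σ → σ)

lemma ovr_append (u v : List σ) : ovr bar (u ++ v) = ovr bar v ++ ovr bar u := by
  simp [ovr]

@[simp] lemma ovr_length (u : List σ) : (ovr bar u).length = u.length := by simp [ovr]

lemma ovr_ovr (hbar : ∀ a, bar (bar a) = a) (u : List σ) : ovr bar (ovr bar u) = u := by
  have h : bar ∘ bar = id := funext hbar
  simp [ovr, List.map_reverse, List.map_map, h]

lemma ovr_drop (u : List σ) (n : ℕ) :
    (ovr bar u).drop (u.length - n) = ovr bar (u.take n) := by
  simp only [ovr]
  rw [List.map_take, List.reverse_take, List.length_map]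

lemma prefix_split {u x y : List σ} (h : u <+: x ++ y) (hl : x.length ≤ u.length) :
    ∃ t, t <+: y ∧ u = x ++ t := by
  obtain ⟨w, hw⟩ := h
  refine ⟨u.drop x.length, ⟨w, ?_⟩, ?_⟩
  · have := congrArg (List.drop x.length) hw
    rwa [List.drop_append_of_le_length hl, List.drop_left] at this
  · have hx : u.take x.length = x := by
      have := congrArg (List.take x.length) hw
      rwa [List.take_append_of_le_length hl, List.take_left] at this
    conv_lhs => rw [← List.take_append_drop x.length u, hx]

lemma suffix_split {u x y : List σ} (h : u <:+ x ++ y) (hl : y.length ≤ u.length) :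
    ∃ s, s <:+ x ∧ u = s ++ y := by
  obtain ⟨w, hw⟩ := h
  have hlw := congrArg List.length hw
  simp only [List.length_append] at hlw
  have hwl : w.length ≤ x.length := by omega
  have hkey : u.drop (u.length - y.length) = y := by
    have h1 := congrArg (List.drop x.length) hw
    rw [List.drop_left] at h1
    have h2 : (w ++ u).drop x.length = u.drop (x.length - w.length) := by
      conv_lhs => rw [show x.length = w.length + (x.length - w.length) by omega]
      rw [List.drop_length_add_append]
    rw [h2] at h1
    rwa [show x.length - w.length = u.length - y.length by omega] at h1
  have hu : u = u.take (u.length - y.length) ++ y := by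
    conv_lhs => rw [← List.take_append_drop (u.length - y.length) u, hkey]
  refine ⟨u.take (u.length - y.length), ⟨w, ?_⟩, hu⟩
  have hrw : w ++ u = (w ++ u.take (u.length - y.length)) ++ y := by
    conv_lhs => rw [hu]
    simp [List.append_assoc]
  rw [hrw] at hw
  exact List.append_cancel_right hw

lemma hairpin_ext (hbar : ∀ a, bar (bar a) = a) {x D B0 P B r : List σ} {m : ℕ}
    (hx2 : x = D ++ B0 ++ ovr bar D) (hx1 : x = P ++ B ++ ovr bar r)
    (hP : P.length = m) (hr : r.length = m) (hD : m ≤ D.length) : r = P := by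
  have h1 : x.take m = P := by
    rw [hx1, List.append_assoc, List.take_left' hP]
  have h2 : x.take m = D.take m := by
    rw [hx2, List.append_assoc, List.take_append_of_le_length hD]
  have h3 : x.drop (x.length - m) = ovr bar r := by
    rw [hx1]
    have hc : (P ++ B ++ ovr bar r).length - m = (P ++ B).length := by
      simp only [List.length_append, ovr_length, hr]; omega
    rw [hc, List.drop_left]
  have h4 : x.drop (x.length - m) = ovr bar (D.take m) := by
    rw [hx2]
    have hc : (D ++ B0 ++ ovr bar D).length - m = (D ++ B0).length + (D.length - m) := by
      simp only [List.length_append, ovr_length]; omega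
    rw [hc, List.drop_length_add_append, ovr_drop]
  have h5 : ovr bar r = ovr bar P := by rw [← h3, h4, ← h2, h1]
  have := congrArg (ovr bar) h5
  rwa [ovr_ovr bar hbar, ovr_ovr bar hbar] at this

lemma eval_append {σ Q : Type} (M : DFA σ Q) (x y : List σ) :
    M.eval (x ++ y) = M.evalFrom (M.eval x) y :=
  M.evalFrom_of_append _ _ _



end Aux

lemma core {σ Q1 Q2 QH : Type} (bar : σ → σ) (hbar : ∀ a, bar (bar a) = a) (κ : ℕ)
    (M1 : DFA σ Q1) (M2 : DFA σ Q2) (MH : DFA σ QH) (L1 L2 : Language σ)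
    (hM1 : M1.accepts = L1) (hM2 : M2.accepts = L2)
    (hMH : MH.accepts = hairpinCompletion bar κ L1 L2)
    (γ α β γ' α' β' : List σ)
    (hc : CanonFact bar κ L1 L2 (γ ++ α ++ β ++ ovr bar α ++ ovr bar γ) γ α β)
    (hc' : CanonFact bar κ L1 L2 (γ' ++ α' ++ β' ++ ovr bar α' ++ ovr bar γ') γ' α' β')
    (hgl : γ.length = γ'.length)
    (hcase : (γ ++ α ++ β ++ ovr bar α ∈ L1 ∧ γ' ++ α' ++ β' ++ ovr bar α' ∈ L1) ∨
             (α ++ β ++ ovr bar α ++ ovr bar γ ∈ L2 ∧ α' ++ β' ++ ovr bar α' ++ ovr bar γ' ∈ L2))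
    (e1 : MH.eval (γ ++ α) = MH.eval (γ' ++ α'))
    (e2 : ∀ q, MH.evalFrom q (ovr bar (γ ++ α)) = MH.evalFrom q (ovr bar (γ' ++ α')))
    (e3 : M1.eval (γ ++ α) = M1.eval (γ' ++ α'))
    (e4 : M1.eval (γ ++ α ++ β) = M1.eval (γ' ++ α' ++ β'))
    (e5 : ∀ q, M2.evalFrom q (β ++ ovr bar (γ ++ α)) = M2.evalFrom q (β' ++ ovr bar (γ' ++ α')))
    (e6 : ∀ q, M2.evalFrom q (ovr bar (γ ++ α)) = M2.evalFrom q (ovr bar (γ' ++ α'))) :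
    γ ++ α = γ' ++ α' := by
  subst hM1
  subst hM2
  obtain ⟨-, hα, hdisj, hpre4, hsuf5⟩ := hc
  obtain ⟨-, hα', hdisj', hpre4', hsuf5'⟩ := hc'
  have hπp : γ ++ α ++ β ++ ovr bar α ++ ovr bar γ
      = (γ ++ α) ++ (β ++ ovr bar (γ ++ α)) := by
    rw [ovr_append]; simp [List.append_assoc]
  have hπp' : γ' ++ α' ++ β' ++ ovr bar α' ++ ovr bar γ'
      = (γ' ++ α') ++ (β' ++ ovr bar (γ' ++ α')) := by
    rw [ovr_append]; simp [List.append_assoc]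
  have hπHC : γ ++ α ++ β ++ ovr bar α ++ ovr bar γ
      ∈ hairpinCompletion bar κ M1.accepts M2.accepts :=
    ⟨γ, α, β, rfl, hα.ge, hdisj⟩
  have hπH : (γ ++ α) ++ (β ++ ovr bar (γ ++ α)) ∈ MH.accepts := by
    rw [hMH, ← hπp]; exact hπHC
  have hlp : (γ ++ α).length = γ.length + κ := by
    simp [List.length_append, hα]
  have hlp' : (γ' ++ α').length = γ.length + κ := by
    simp [List.length_append, hα', hgl]
  rcases hcase with ⟨hA, hA'⟩ | ⟨hA, hA'⟩
  · -- L1 case; crossover χ = p' ++ (β ++ ovr p)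
    have hχH : (γ' ++ α') ++ (β ++ ovr bar (γ ++ α))
        ∈ hairpinCompletion bar κ M1.accepts M2.accepts := by
      rw [← hMH, DFA.mem_accepts, eval_append, ← e1, ← eval_append]
      exact (DFA.mem_accepts _).mp hπH
    obtain ⟨δ, α₀, β₀, hxeq, hκ₀, hside⟩ := hχH
    have hχlen := congrArg List.length hxeq
    simp only [List.length_append, ovr_length] at hχlen
    by_cases hb : ∃ s, s <:+ γ' ++ α' ∧ κ < s.length ∧
        s ++ (β ++ ovr bar (γ ++ α)) ∈ M2.accepts
    · exfalso
      obtain ⟨s, hs, hsl, hsL2⟩ := hb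
      have hsL2' : s ++ (β' ++ ovr bar (γ' ++ α')) ∈ M2.accepts := by
        rw [DFA.mem_accepts] at hsL2 ⊢
        rw [eval_append] at hsL2 ⊢
        rw [← e5]; exact hsL2
      obtain ⟨w, hw⟩ := hs
      have hsuf : s ++ (β' ++ ovr bar (γ' ++ α'))
          <:+ γ' ++ α' ++ β' ++ ovr bar α' ++ ovr bar γ' := by
        rw [hπp', ← hw]
        exact ⟨w, by simp [List.append_assoc]⟩
      have hle := (hsuf5' _ hsuf hsL2').length_le
      simp only [List.length_append, ovr_length] at hle
      omega
    · push_neg at hb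
      have hL1pref : ∀ u, u <+: (γ' ++ α') ++ (β ++ ovr bar (γ ++ α)) →
          u ∈ M1.accepts → u.length ≤ γ.length + κ + β.length + κ := by
        intro u hu huL1
        by_contra hcon
        push_neg at hcon
        have hu2 : u <+: ((γ' ++ α') ++ β) ++ ovr bar (γ ++ α) := by
          simpa [List.append_assoc] using hu
        obtain ⟨t, ht, rfl⟩ := prefix_split hu2
          (by simp only [List.length_append, ovr_length] at hcon ⊢; omega)
        have hL1t : (γ ++ α) ++ (β ++ t) ∈ M1.accepts := by
          rw [DFA.mem_accepts] at huL1 ⊢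
          rw [show ((γ' ++ α') ++ β) ++ t = (γ' ++ α') ++ (β ++ t) by
            simp [List.append_assoc]] at huL1
          rw [eval_append] at huL1 ⊢
          rw [← e3] at huL1
          exact huL1
        obtain ⟨v, hv⟩ := ht
        have hpre : (γ ++ α) ++ (β ++ t) <+: γ ++ α ++ β ++ ovr bar α ++ ovr bar γ := by
          rw [hπp]
          exact ⟨v, by simp only [List.append_assoc]; rw [hv]⟩
        have hle := (hpre4 _ hpre hL1t).length_le
        simp only [List.length_append, ovr_length] at hle hcon
        omega
      have hL2suff : ∀ u, u <:+ (γ' ++ α') ++ (β ++ ovr bar (γ ++ α)) →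
          u ∈ M2.accepts → u.length ≤ γ.length + κ + β.length + κ := by
        intro u hu huL2
        by_contra hcon
        push_neg at hcon
        obtain ⟨s, hs, rfl⟩ := suffix_split hu
          (by simp only [List.length_append, ovr_length] at hcon ⊢; omega)
        refine hb s hs ?_ huL2
        simp only [List.length_append, ovr_length] at hcon
        omega
      have hg0 : γ.length ≤ δ.length := by
        rcases hside with hL | hL
        · have hpr : δ ++ α₀ ++ β₀ ++ ovr bar α₀
              <+: (γ' ++ α') ++ (β ++ ovr bar (γ ++ α)) := by
            rw [hxeq]; exact ⟨ovr bar δ, by simp [List.append_assoc]⟩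
          have := hL1pref _ hpr hL
          simp only [List.length_append, ovr_length] at this
          omega
        · have hsf : α₀ ++ β₀ ++ ovr bar α₀ ++ ovr bar δ
              <:+ (γ' ++ α') ++ (β ++ ovr bar (γ ++ α)) := by
            rw [hxeq]; exact ⟨δ, by simp [List.append_assoc]⟩
          have := hL2suff _ hsf hL
          simp only [List.length_append, ovr_length] at this
          omega
      have hx2 : (γ' ++ α') ++ (β ++ ovr bar (γ ++ α))
          = (δ ++ α₀) ++ β₀ ++ ovr bar (δ ++ α₀) := by
        rw [hxeq, ovr_append]; simp [List.append_assoc]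
      have hx1 : (γ' ++ α') ++ (β ++ ovr bar (γ ++ α))
          = (γ' ++ α') ++ β ++ ovr bar (γ ++ α) :=
        (List.append_assoc _ _ _).symm
      exact hairpin_ext bar hbar hx2 hx1 hlp' hlp
        (by simp only [List.length_append]; omega)
  · -- L2 case; crossover χ = p ++ (β ++ ovr p')
    have hχH : (γ ++ α) ++ (β ++ ovr bar (γ' ++ α'))
        ∈ hairpinCompletion bar κ M1.accepts M2.accepts := by
      rw [← hMH]
      rw [show (γ ++ α) ++ (β ++ ovr bar (γ' ++ α'))
          = ((γ ++ α) ++ β) ++ ovr bar (γ' ++ α') by simp [List.append_assoc]]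
      rw [DFA.mem_accepts, eval_append, ← e2, ← eval_append]
      rw [show ((γ ++ α) ++ β) ++ ovr bar (γ ++ α)
          = (γ ++ α) ++ (β ++ ovr bar (γ ++ α)) by simp [List.append_assoc]]
      exact (DFA.mem_accepts _).mp hπH
    obtain ⟨δ, α₀, β₀, hxeq, hκ₀, hside⟩ := hχH
    have hχlen := congrArg List.length hxeq
    simp only [List.length_append, ovr_length] at hχlen
    by_cases hb : ∃ t, t <+: ovr bar (γ' ++ α') ∧ κ < t.length ∧
        (γ ++ α) ++ (β ++ t) ∈ M1.accepts
    · exfalso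
      obtain ⟨t, ht, htl, htL1⟩ := hb
      have htL1' : (γ' ++ α') ++ (β' ++ t) ∈ M1.accepts := by
        rw [DFA.mem_accepts] at htL1 ⊢
        rw [show (γ ++ α) ++ (β ++ t) = ((γ ++ α) ++ β) ++ t by
          simp [List.append_assoc]] at htL1
        rw [show (γ' ++ α') ++ (β' ++ t) = ((γ' ++ α') ++ β') ++ t by
          simp [List.append_assoc]]
        rw [eval_append] at htL1 ⊢
        rw [← e4]
        exact htL1
      obtain ⟨v, hv⟩ := ht
      have hpre : (γ' ++ α') ++ (β' ++ t) <+: γ' ++ α' ++ β' ++ ovr bar α' ++ ovr bar γ' := by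
        rw [hπp']
        exact ⟨v, by simp only [List.append_assoc]; rw [hv]⟩
      have hle := (hpre4' _ hpre htL1').length_le
      simp only [List.length_append, ovr_length] at hle htl
      omega
    · push_neg at hb
      have hL1pref : ∀ u, u <+: (γ ++ α) ++ (β ++ ovr bar (γ' ++ α')) →
          u ∈ M1.accepts → u.length ≤ γ.length + κ + β.length + κ := by
        intro u hu huL1
        by_contra hcon
        push_neg at hcon
        have hu2 : u <+: ((γ ++ α) ++ β) ++ ovr bar (γ' ++ α') := by
          simpa [List.append_assoc] using hu
        obtain ⟨t, ht, rfl⟩ := prefix_split hu2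
          (by simp only [List.length_append, ovr_length] at hcon ⊢; omega)
        refine hb t ht ?_ ?_
        · simp only [List.length_append, ovr_length] at hcon
          omega
        · rw [show (γ ++ α) ++ (β ++ t) = ((γ ++ α) ++ β) ++ t by
            simp [List.append_assoc]]
          exact huL1
      have hL2suff : ∀ u, u <:+ (γ ++ α) ++ (β ++ ovr bar (γ' ++ α')) →
          u ∈ M2.accepts → u.length ≤ γ.length + κ + β.length + κ := by
        intro u hu huL2
        by_contra hcon
        push_neg at hcon
        obtain ⟨s, hs, rfl⟩ := suffix_split hu
          (by simp only [List.length_append, ovr_length] at hcon ⊢; omega)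
        have hsL2 : s ++ (β ++ ovr bar (γ ++ α)) ∈ M2.accepts := by
          rw [DFA.mem_accepts] at huL2 ⊢
          rw [show s ++ (β ++ ovr bar (γ' ++ α')) = (s ++ β) ++ ovr bar (γ' ++ α') by
            simp [List.append_assoc]] at huL2
          rw [show s ++ (β ++ ovr bar (γ ++ α)) = (s ++ β) ++ ovr bar (γ ++ α) by
            simp [List.append_assoc]]
          rw [eval_append] at huL2 ⊢
          rw [e6]
          exact huL2
        obtain ⟨w, hw⟩ := hs
        have hsuf : s ++ (β ++ ovr bar (γ ++ α))
            <:+ γ ++ α ++ β ++ ovr bar α ++ ovr bar γ := by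
          rw [hπp, ← hw]
          exact ⟨w, by simp [List.append_assoc]⟩
        have hle := (hsuf5 _ hsuf hsL2).length_le
        simp only [List.length_append, ovr_length] at hle hcon
        omega
      have hg0 : γ.length ≤ δ.length := by
        rcases hside with hL | hL
        · have hpr : δ ++ α₀ ++ β₀ ++ ovr bar α₀
              <+: (γ ++ α) ++ (β ++ ovr bar (γ' ++ α')) := by
            rw [hxeq]; exact ⟨ovr bar δ, by simp [List.append_assoc]⟩
          have := hL1pref _ hpr hL
          simp only [List.length_append, ovr_length] at this
          omega
        · have hsf : α₀ ++ β₀ ++ ovr bar α₀ ++ ovr bar δ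
              <:+ (γ ++ α) ++ (β ++ ovr bar (γ' ++ α')) := by
            rw [hxeq]; exact ⟨δ, by simp [List.append_assoc]⟩
          have := hL2suff _ hsf hL
          simp only [List.length_append, ovr_length] at this
          omega
      have hx2 : (γ ++ α) ++ (β ++ ovr bar (γ' ++ α'))
          = (δ ++ α₀) ++ β₀ ++ ovr bar (δ ++ α₀) := by
        rw [hxeq, ovr_append]; simp [List.append_assoc]
      have hx1 : (γ ++ α) ++ (β ++ ovr bar (γ' ++ α'))
          = (γ ++ α) ++ β ++ ovr bar (γ' ++ α') :=
        (List.append_assoc _ _ _).symm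
      exact (hairpin_ext bar hbar hx2 hx1 hlp hlp'
        (by simp only [List.length_append]; omega)).symm


theorem mgp_growth_of_regular_hairpin_completion
    {σ : Type} [Fintype σ] (hσ : 2 ≤ Fintype.card σ)
    (bar : σ → σ) (hbar : ∀ a, bar (bar a) = a)
    (κ : ℕ) (hκ : 1 ≤ κ)
    (L1 L2 : Language σ) (h1 : L1.IsRegular) (h2 : L2.IsRegular)
    (hreg : (hairpinCompletion bar κ L1 L2).IsRegular) :
    growthInd (MGP bar κ L1 L2) ≤ 1 := by
  classical
  obtain ⟨Q1, fQ1, M1, hM1⟩ := h1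
  obtain ⟨Q2, fQ2, M2, hM2⟩ := h2
  obtain ⟨QH, fQH, MH, hMH⟩ := hreg
  haveI := fQ1; haveI := fQ2; haveI := fQH
  have spec : ∀ w ∈ MGP bar κ L1 L2, ∃ x : List σ × List σ × List σ,
      CanonFact bar κ L1 L2 (x.1 ++ x.2.1 ++ x.2.2 ++ ovr bar x.2.1 ++ ovr bar x.1)
        x.1 x.2.1 x.2.2 ∧ w = x.1 ++ x.2.1 := by
    intro w hw
    obtain ⟨π, γ, α, β, hπ, hcf, hw'⟩ := hw
    refine ⟨(γ, α, β), ?_, hw'⟩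
    have h := hcf
    rw [hcf.1] at h
    exact h
  choose F hF1 hF2 using spec
  have key : ∀ (w w' : List σ) (hw : w ∈ MGP bar κ L1 L2) (hw' : w' ∈ MGP bar κ L1 L2),
      w.length = w'.length →
      ((F w hw).1 ++ (F w hw).2.1 ++ (F w hw).2.2 ++ ovr bar (F w hw).2.1 ∈ L1) =
        ((F w' hw').1 ++ (F w' hw').2.1 ++ (F w' hw').2.2 ++ ovr bar (F w' hw').2.1 ∈ L1) →
      MH.eval w = MH.eval w' →
      (∀ q, MH.evalFrom q (ovr bar w) = MH.evalFrom q (ovr bar w')) →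
      M1.eval w = M1.eval w' →
      M1.eval (w ++ (F w hw).2.2) = M1.eval (w' ++ (F w' hw').2.2) →
      (∀ q, M2.evalFrom q ((F w hw).2.2 ++ ovr bar w) =
        M2.evalFrom q ((F w' hw').2.2 ++ ovr bar w')) →
      (∀ q, M2.evalFrom q (ovr bar w) = M2.evalFrom q (ovr bar w')) →
      w = w' := by
    intro w w' hw hw' hlen p0 p1 p2 p3 p4 p5 p6
    have hcf := hF1 w hw
    have hcf' := hF1 w' hw'
    have hw2 := hF2 w hw
    have hw2' := hF2 w' hw'
    have hγl : (F w hw).1.length = (F w' hw').1.length := by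
      have l1 := congrArg List.length hw2
      have l2 := congrArg List.length hw2'
      simp only [List.length_append] at l1 l2
      have e1 := hcf.2.1
      have e2 := hcf'.2.1
      omega
    have hcase : ((F w hw).1 ++ (F w hw).2.1 ++ (F w hw).2.2 ++ ovr bar (F w hw).2.1 ∈ L1 ∧
          (F w' hw').1 ++ (F w' hw').2.1 ++ (F w' hw').2.2 ++ ovr bar (F w' hw').2.1 ∈ L1) ∨
        ((F w hw).2.1 ++ (F w hw).2.2 ++ ovr bar (F w hw).2.1 ++ ovr bar (F w hw).1 ∈ L2 ∧
          (F w' hw').2.1 ++ (F w' hw').2.2 ++ ovr bar (F w' hw').2.1 ++ ovr bar (F w' hw').1 ∈ L2) := by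
      by_cases hc1 : (F w hw).1 ++ (F w hw).2.1 ++ (F w hw).2.2 ++ ovr bar (F w hw).2.1 ∈ L1
      · exact Or.inl ⟨hc1, Eq.mp p0 hc1⟩
      · exact Or.inr ⟨hcf.2.2.1.resolve_left hc1,
          hcf'.2.2.1.resolve_left (fun h => hc1 (Eq.mp p0.symm h))⟩
    have hmain := core bar hbar κ M1 M2 MH L1 L2 hM1 hM2 hMH
      (F w hw).1 (F w hw).2.1 (F w hw).2.2 (F w' hw').1 (F w' hw').2.1 (F w' hw').2.2
      hcf hcf' hγl hcase
      (by rw [← hw2, ← hw2']; exact p1)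
      (by intro q; rw [← hw2, ← hw2']; exact p2 q)
      (by rw [← hw2, ← hw2']; exact p3)
      (by rw [← hw2, ← hw2']; exact p4)
      (by intro q; rw [← hw2, ← hw2']; exact p5 q)
      (by intro q; rw [← hw2, ← hw2']; exact p6 q)
    rw [hw2, hw2', hmain]
  set Prof := (Prop × QH × (QH → QH) × Q1 × Q1 × (Q2 → Q2) × (Q2 → Q2)) with hProf
  haveI : Finite Prof := by
    rw [hProf]; infer_instance
  have count : ∀ m : ℕ, { w : List σ | w ∈ MGP bar κ L1 L2 ∧ w.length = m }.ncard
      ≤ Nat.card Prof := by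
    intro m
    classical
    let f : List σ → Prof := fun w =>
      if hw : w ∈ MGP bar κ L1 L2 then
        (((F w hw).1 ++ (F w hw).2.1 ++ (F w hw).2.2 ++ ovr bar (F w hw).2.1 ∈ L1),
          MH.eval w,
          fun q => MH.evalFrom q (ovr bar w),
          M1.eval w,
          M1.eval (w ++ (F w hw).2.2),
          fun q => M2.evalFrom q ((F w hw).2.2 ++ ovr bar w),
          fun q => M2.evalFrom q (ovr bar w))
      else (True, MH.start, id, M1.start, M1.start, id, id)
    have hinj : Set.InjOn f { w : List σ | w ∈ MGP bar κ L1 L2 ∧ w.length = m } := by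
      intro w hwS w' hwS' hf
      have hw := hwS.1
      have hw' := hwS'.1
      simp only [f] at hf
      rw [dif_pos hw, dif_pos hw'] at hf
      exact key w w' hw hw' (hwS.2.trans hwS'.2.symm)
        (congrArg (fun t => t.1) hf)
        (congrArg (fun t => t.2.1) hf)
        (fun q => congrFun (congrArg (fun t => t.2.2.1) hf) q)
        (congrArg (fun t => t.2.2.2.1) hf)
        (congrArg (fun t => t.2.2.2.2.1) hf)
        (fun q => congrFun (congrArg (fun t => t.2.2.2.2.2.1) hf) q)
        (fun q => congrFun (congrArg (fun t => t.2.2.2.2.2.2) hf) q)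
    calc { w : List σ | w ∈ MGP bar κ L1 L2 ∧ w.length = m }.ncard
        = (f '' { w : List σ | w ∈ MGP bar κ L1 L2 ∧ w.length = m }).ncard :=
          (Set.ncard_image_of_injOn hinj).symm
      _ ≤ (Set.univ : Set Prof).ncard :=
          Set.ncard_le_ncard (Set.subset_univ _) (Set.toFinite _)
      _ = Nat.card Prof := Set.ncard_univ _
  unfold growthInd
  apply csInf_le
  · exact ⟨0, fun l hl => hl.1⟩
  · refine ⟨zero_le_one, (Nat.card Prof : ℝ) + 1, by positivity, fun m => ?_⟩
    rw [one_pow, mul_one]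
    have h2 : (({ w : List σ | w ∈ MGP bar κ L1 L2 ∧ w.length = m }).ncard : ℝ)
        ≤ (Nat.card Prof : ℝ) := by exact_mod_cast count m
    linarith
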